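/- Consider A₁ = [[-1,-1],[1,-1]] and A₂ = [[-1,-10],[0.1,-1]]. Both A₁ and A₂ are Hurwitz (all eigenvalues have negative real part), but there exists no symmetric positive definite matrix P with A₁ᵀP + PA₁ ≺ 0 and A₂ᵀP + PA₂ ≺ 0 simultaneously (no common quadratic Lyapunov function). -/
import Mathlib


open Matrix

lemma aux_re_neg (z : ℂ) (hdet : (z + 1) * (z + 1) + 1 = 0) : z.re < 0 := by
  have hre := congrArg Complex.re hdet
  have him := congrArg Complex.im hdet
  simp [Complex.add_re, Complex.add_im, Complex.mul_re, Complex.mul_im] at hre him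
  by_contra hx
  push_neg at hx
  have h1 : z.im = 0 := by
    rcases mul_eq_zero.mp (show z.im * (z.re + 1) = 0 by linarith) with h | h
    · exact h
    · nlinarith
  nlinarith

/-- Dayawansa–Martin example: For
`A₁ = [[-1,-1],[1,-1]]` and `A₂ = [[-1,-10],[0.1,-1]]`, both matrices are Hurwitz
(all complex eigenvalues have negative real part), but no symmetric positive definite `P`
satisfies `A₁ᵀP + PA₁ ≺ 0` and `A₂ᵀP + PA₂ ≺ 0` simultaneously. -/
theorem no_common_quadratic_lyapunov :
    let A₁ : Matrix (Fin 2) (Fin 2) ℝ := !![-1, -1; 1, -1]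
    let A₂ : Matrix (Fin 2) (Fin 2) ℝ := !![-1, -10; 0.1, -1]
    (∀ z ∈ spectrum ℂ (A₁.map (algebraMap ℝ ℂ)), z.re < 0) ∧
    (∀ z ∈ spectrum ℂ (A₂.map (algebraMap ℝ ℂ)), z.re < 0) ∧
    ¬ ∃ P : Matrix (Fin 2) (Fin 2) ℝ, P.PosDef ∧
      (-(A₁ᵀ * P + P * A₁)).PosDef ∧ (-(A₂ᵀ * P + P * A₂)).PosDef := by
  intro A₁ A₂
  have hA1 : A₁ = !![-1, -1; 1, -1] := rfl
  have hA2 : A₂ = !![-1, -10; 0.1, -1] := rfl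
  refine ⟨?_, ?_, ?_⟩
  · intro z hz
    rw [spectrum.mem_iff] at hz
    have hdet : (algebraMap ℂ (Matrix (Fin 2) (Fin 2) ℂ) z - A₁.map (algebraMap ℝ ℂ)).det = 0 := by
      by_contra hd
      exact hz ((Matrix.isUnit_iff_isUnit_det _).mpr (isUnit_iff_ne_zero.mpr hd))
    rw [hA1] at hdet
    simp [Matrix.det_fin_two, Matrix.algebraMap_matrix_apply, Matrix.map_apply] at hdet
    exact aux_re_neg z hdet
  · intro z hz
    rw [spectrum.mem_iff] at hz
    have hdet : (algebraMap ℂ (Matrix (Fin 2) (Fin 2) ℂ) z - A₂.map (algebraMap ℝ ℂ)).det = 0 := by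
      by_contra hd
      exact hz ((Matrix.isUnit_iff_isUnit_det _).mpr (isUnit_iff_ne_zero.mpr hd))
    rw [hA2] at hdet
    norm_num [Matrix.det_fin_two, Matrix.algebraMap_matrix_apply, Matrix.map_apply] at hdet
    apply aux_re_neg z
    linear_combination hdet
  · rw [hA1, hA2]
    rintro ⟨P, hP, hQ1, hQ2⟩
    have ht1 : (!![-1, -1; 1, -1]:Matrix (Fin 2) (Fin 2) ℝ)ᵀ = !![-1, 1; -1, -1] := by
      ext i j; fin_cases i <;> fin_cases j <;> rfl
    have ht2 : (!![-1, -10; 0.1, -1]:Matrix (Fin 2) (Fin 2) ℝ)ᵀ = !![-1, 0.1; -10, -1] := by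
      ext i j; fin_cases i <;> fin_cases j <;> rfl
    rw [ht1] at hQ1
    rw [ht2] at hQ2
    have hsym : P 1 0 = P 0 1 := by
      have h := congrFun (congrFun hP.1 1) 0
      simpa [Matrix.conjTranspose_apply] using h.symm
    have hdP := hP.det_pos
    have hd1 := hQ1.det_pos
    have hd2 := hQ2.det_pos
    rw [Matrix.det_fin_two] at hdP hd1 hd2
    simp [Matrix.mul_apply, Matrix.vecMul, dotProduct, Fin.sum_univ_two, hsym] at hd1 hd2
    rw [hsym] at hdP
    nlinarith [sq_nonneg (10 * P 0 0 - P 1 1), sq_nonneg (P 0 1), mul_pos hP.det_pos hP.det_pos]
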